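/- Kleene's first model K₁ with the equivalence ∼_e (n ∼_e m iff φ_n(x) ≃ φ_m(x) for all x) is ∼_e-extensional but not ∼_e-algebraic: ∼_e is not a congruence for application, since there exist n, m, m' ∈ ℕ with m ∼_e m' but n·m ≁_e n·m' (in the extended sense). -/

import Mathlib

/-- Application in Kleene's first model `K₁`: `n·m = φₙ(m)`. -/
def K1 (n m : ℕ) : Part ℕ := (Denumerable.ofNat Nat.Partrec.Code n).eval m

/-- Extension of a relation on values to partial values: either both are
undefined, or both are defined with related values. -/
def PartRel {A : Type} (r : A → A → Prop) (x y : Part A) : Prop :=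
  (¬ x.Dom ∧ ¬ y.Dom) ∨ (∃ a ∈ x, ∃ b ∈ y, r a b)

/-- The equivalence `n ∼ₑ m` iff `φₙ(x) ≃ φₘ(x)` for all `x`. -/
def simEqK (n m : ℕ) : Prop := ∀ x : ℕ, K1 n x = K1 m x

open Nat.Partrec (Code)
open Nat.Partrec.Code

theorem K1_encode (c : Code) (m : ℕ) : K1 (Encodable.encode c) m = c.eval m := by
  simp [K1]

/-- `K₁` is `∼ₑ`-extensional but `∼ₑ` is not algebraic: there are `n, m, m'`
with `m ∼ₑ m'` but `n·m ≁ₑ n·m'` (extended sense). -/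
theorem K1_ext_not_algebraic :
    (∀ f g : ℕ, (∀ x : ℕ, K1 f x = K1 g x) → simEqK f g) ∧
    (∃ n m m' : ℕ, simEqK m m' ∧ ¬ PartRel simEqK (K1 n m) (K1 n m')) := by
  constructor
  · exact fun f g h => h
  · -- n : code computing x ↦ encode (const x)
    have hpr : Nat.Partrec (fun x => Part.some (Encodable.encode (Code.const x))) := by
      have h : Computable (fun x : ℕ => Encodable.encode (Code.const x)) :=
        (Primrec.encode.comp primrec_const).to_comp
      exact Partrec.nat_iff.1 h.partrec
    obtain ⟨c, hc⟩ := exists_code.1 hpr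
    refine ⟨Encodable.encode c, Encodable.encode Code.zero,
      Encodable.encode (Code.zero.comp Code.zero), ?_, ?_⟩
    · intro x
      rw [K1_encode, K1_encode]
      show Part.some 0 = (Part.some 0).bind (fun _ => Part.some 0)
      simp
    · rw [K1_encode, K1_encode, hc]
      rintro (⟨h1, _⟩ | ⟨a, ha, b, hb, hab⟩)
      · exact h1 trivial
      · simp only [Part.mem_some_iff] at ha hb
        subst ha; subst hb
        have := hab 0
        rw [K1_encode, K1_encode, eval_const, eval_const] at this
        have h2 : Code.zero = Code.zero.comp Code.zero :=
          Encodable.encode_injective (by simpa using this)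
        exact absurd h2 (by simp)
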